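/- Fix j ∈ {1,…,N} and assume: (a) (D_j R_j A V, W^j) = (D_j B_j R_j V, W^j) for all V ∈ ℂ^n and all W^j ∈ ℂ^{n_j}; (e) there exists C_{DB,j} > 0 with |([D_j, B_j] V^j, W^j)| ≤ C_{DB,j} ‖V^j‖_{Ω_j} ‖W^j‖_{Ω_j} for all V^j, W^j ∈ ℂ^{n_j}; (f) there exists C_{stab,j} > 0 such that ‖U^j‖_{Ω_j} ≤ C_{stab,j} · max_{W^j ≠ 0} |(B_j U^j, W^j)| / ‖W^j‖_{Ω_j} for all U^j ∈ ℂ^{n_j}. Then for all V ∈ ℂ^n, ‖(B_j⁻¹ D_j R_j A − D_j R_j) V‖_{Ω_j} ≤ C_{stab,j} C_{DB,j} ‖R_j V‖_{Ω_j}. -/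

import Mathlib

open Matrix
open scoped ComplexOrder

/-- Hermitian inner product `(V, W) = W* V`. -/
noncomputable def iprod {m : ℕ} (V W : Fin m → ℂ) : ℂ := star W ⬝ᵥ V

/-- Weighted norm `‖V‖_F = ((F V, V))^{1/2}` for a Hermitian positive definite `F`. -/
noncomputable def wnorm {m : ℕ} (F : Matrix (Fin m) (Fin m) ℂ) (V : Fin m → ℂ) : ℝ :=
  Real.sqrt (iprod (F.mulVec V) V).re

lemma iprod_ext {m : ℕ} {X Y : Fin m → ℂ} (h : ∀ W, iprod X W = iprod Y W) : X = Y := by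
  funext i
  have := h (Pi.single i 1)
  simpa [iprod, dotProduct, Pi.single_apply, apply_ite, Finset.sum_ite_eq'] using this

lemma wnorm_nonneg {m : ℕ} (F : Matrix (Fin m) (Fin m) ℂ) (V : Fin m → ℂ) :
    0 ≤ wnorm F V := Real.sqrt_nonneg _

lemma wnorm_pos {m : ℕ} {F : Matrix (Fin m) (Fin m) ℂ} (hF : F.PosDef)
    {V : Fin m → ℂ} (hV : V ≠ 0) : 0 < wnorm F V := by
  have h := hF.dotProduct_mulVec_pos hV
  rw [Complex.lt_def] at h
  have : 0 < (iprod (F.mulVec V) V).re := by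
    simpa [iprod, dotProduct, mul_comm] using h.1
  exact Real.sqrt_pos.mpr this

/-- under the local/global compatibility (a), the commutator bound (e)
and the inf-sup stability (f), `‖(B⁻¹ D R A − D R) V‖_{Ω_j} ≤ C_stab C_DB ‖R V‖_{Ω_j}`. -/
theorem stmt3 (n m N : ℕ) (hn : 1 ≤ n) (hN : 1 ≤ N) (hm : 1 ≤ m)
    (A : Matrix (Fin n) (Fin n) ℂ)
    (R : Matrix (Fin m) (Fin n) ℂ)
    (D B : Matrix (Fin m) (Fin m) ℂ)
    (FF : Matrix (Fin m) (Fin m) ℂ)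
    (hD : ∃ dd : Fin m → ℝ, (∀ i, 0 ≤ dd i) ∧ D = Matrix.diagonal fun i => (dd i : ℂ))
    (hB : IsUnit B)
    (hFF : FF.PosDef)
    (CDB Cstab : ℝ) (hCDB : 0 < CDB) (hCstab : 0 < Cstab)
    (ha : ∀ (V : Fin n → ℂ) (W : Fin m → ℂ),
      iprod (D.mulVec (R.mulVec (A.mulVec V))) W
        = iprod (D.mulVec (B.mulVec (R.mulVec V))) W)
    (he : ∀ V W : Fin m → ℂ,
      ‖iprod ((D * B - B * D).mulVec V) W‖ ≤ CDB * wnorm FF V * wnorm FF W)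
    (hf : ∀ U : Fin m → ℂ,
      wnorm FF U ≤ Cstab * ⨆ W : {W : Fin m → ℂ // W ≠ 0},
        ‖iprod (B.mulVec U) W.1‖ / wnorm FF W.1) :
    ∀ V : Fin n → ℂ,
      wnorm FF ((B⁻¹ * D * R * A - D * R).mulVec V) ≤ Cstab * CDB * wnorm FF (R.mulVec V) := by
  intro V
  have hBdet : IsUnit B.det := (Matrix.isUnit_iff_isUnit_det B).mp hB
  set U : Fin m → ℂ := (B⁻¹ * D * R * A - D * R).mulVec V with hU
  -- (a) implies the vector identity
  have hDRA : (D * R * A).mulVec V = (D * B * R).mulVec V := by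
    apply iprod_ext
    intro W
    have := ha V W
    simpa [mulVec_mulVec, Matrix.mul_assoc] using this
  have hBU : B.mulVec U = (D * B - B * D).mulVec (R.mulVec V) := by
    rw [hU, mulVec_mulVec, Matrix.mul_sub]
    have h1 : B * (B⁻¹ * D * R * A) = D * R * A := by
      rw [← Matrix.mul_assoc, ← Matrix.mul_assoc, ← Matrix.mul_assoc,
        Matrix.mul_nonsing_inv B hBdet, Matrix.one_mul]
    rw [h1, sub_mulVec, hDRA, ← sub_mulVec, mulVec_mulVec, Matrix.sub_mul,
      Matrix.mul_assoc, Matrix.mul_assoc]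
  -- nonemptiness of the index set
  have hne : Nonempty {W : Fin m → ℂ // W ≠ 0} := by
    refine ⟨⟨Pi.single ⟨0, hm⟩ 1, ?_⟩⟩
    intro h
    have := congrFun h ⟨0, hm⟩
    simp [Pi.single_apply] at this
  have hsup : (⨆ W : {W : Fin m → ℂ // W ≠ 0},
      ‖iprod (B.mulVec U) W.1‖ / wnorm FF W.1) ≤ CDB * wnorm FF (R.mulVec V) := by
    apply ciSup_le
    intro ⟨W, hW⟩
    have hWpos := wnorm_pos hFF hW
    rw [div_le_iff₀ hWpos, hBU]
    calc ‖iprod ((D * B - B * D).mulVec (R.mulVec V)) W‖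
        ≤ CDB * wnorm FF (R.mulVec V) * wnorm FF W := he _ _
      _ = CDB * wnorm FF (R.mulVec V) * wnorm FF W := rfl
  calc wnorm FF U ≤ Cstab * ⨆ W : {W : Fin m → ℂ // W ≠ 0},
        ‖iprod (B.mulVec U) W.1‖ / wnorm FF W.1 := hf U
    _ ≤ Cstab * (CDB * wnorm FF (R.mulVec V)) := by
        exact mul_le_mul_of_nonneg_left hsup hCstab.le
    _ = Cstab * CDB * wnorm FF (R.mulVec V) := by ring
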